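/- arXiv:0711.0251 — 9 statements merged into one kernel-verified Lean document; each statement's English description precedes it below -/
import Mathlib

section
/- Let G be a DAG on n vertices with topological ordering ord, and let u, v be vertices with ord(v) < ord(u) such that there is no directed path from v to u in G. Let ord' be the canonical reordering for ord, u, v. Then ord' is a topological ordering of the graph G+(u,v): for every edge (a,b) of G one has ord'(a) < ord'(b), and also ord'(u) < ord'(v). -/
/-- Reachability: a directed path (possibly of length 0) from `x` to `y`. -/
def Reach {V : Type*} (E : V → V → Prop) : V → V → Prop :=
  Relation.ReflTransGen E

/-- A digraph is acyclic if it has no directed cycle. -/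
def Acyclic {V : Type*} (E : V → V → Prop) : Prop :=
  ∀ x, ¬ Relation.TransGen E x x

/-- `ord` is a topological ordering of the digraph `E`. -/
def IsTopOrd {V : Type*} {n : ℕ} (E : V → V → Prop) (ord : V ≃ Fin n) : Prop :=
  ∀ a b, E a b → ord a < ord b

/-- The graph `G + (u,v)`: the edge `(u,v)` is added to `E`. -/
def AddEdge {V : Type*} (E : V → V → Prop) (u v : V) : V → V → Prop :=
  fun a b => E a b ∨ (a = u ∧ b = v)

/-- `A = {x : ord v ≤ ord x ≤ ord u and x ⇝ u}`. -/
def AncS {V : Type*} {n : ℕ} (E : V → V → Prop) (ord : V ≃ Fin n) (u v : V) : Set V :=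
  {x | ord v ≤ ord x ∧ ord x ≤ ord u ∧ Reach E x u}

/-- `D = {x : ord v ≤ ord x ≤ ord u and v ⇝ x}`. -/
def DesS {V : Type*} {n : ℕ} (E : V → V → Prop) (ord : V ≃ Fin n) (u v : V) : Set V :=
  {x | ord v ≤ ord x ∧ ord x ≤ ord u ∧ Reach E v x}

/-- `ord'` is a canonical reordering for `ord, u, v`: conditions (a)-(d). -/
def IsCanonical {V : Type*} {n : ℕ} (E : V → V → Prop) (ord ord' : V ≃ Fin n)
    (u v : V) : Prop :=
  (∀ x, x ∉ AncS E ord u v ∪ DesS E ord u v → ord' x = ord x) ∧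
  (⇑ord' '' (AncS E ord u v ∪ DesS E ord u v) =
    ⇑ord '' (AncS E ord u v ∪ DesS E ord u v)) ∧
  (∀ x y, (x ∈ AncS E ord u v ∧ y ∈ AncS E ord u v) ∨
          (x ∈ DesS E ord u v ∧ y ∈ DesS E ord u v) →
      (ord' x < ord' y ↔ ord x < ord y)) ∧
  (∀ x ∈ AncS E ord u v, ∀ y ∈ DesS E ord u v, ord' x < ord' y)

private lemma pos_le_aux {n : ℕ} {P : Set (Fin n)} {p q : Fin n} (hp : p ∈ P)
    (h : {r ∈ P | r ≤ p}.ncard ≤ {r ∈ P | r ≤ q}.ncard) : p ≤ q := by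
  by_contra hq
  push_neg at hq
  have hss : {r ∈ P | r ≤ q} ⊂ {r ∈ P | r ≤ p} := by
    refine ⟨fun r hr => ⟨hr.1, hr.2.trans hq.le⟩, fun hsub => ?_⟩
    exact absurd ((hsub ⟨hp, le_refl p⟩).2) (not_le.2 hq)
  exact absurd (Set.ncard_lt_ncard hss (Set.toFinite _)) (not_lt.2 h)

private lemma pos_ge_aux {n : ℕ} {P : Set (Fin n)} {p q : Fin n} (hp : p ∈ P)
    (h : {r ∈ P | p ≤ r}.ncard ≤ {r ∈ P | q ≤ r}.ncard) : q ≤ p := by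
  by_contra hq
  push_neg at hq
  have hss : {r ∈ P | q ≤ r} ⊂ {r ∈ P | p ≤ r} := by
    refine ⟨fun r hr => ⟨hr.1, hq.le.trans hr.2⟩, fun hsub => ?_⟩
    exact absurd ((hsub ⟨hp, le_refl p⟩).2) (not_le.2 hq)
  exact absurd (Set.ncard_lt_ncard hss (Set.toFinite _)) (not_lt.2 h)

private lemma ord'_le_ord {V : Type*} [Fintype V] {n : ℕ}
    (E : V → V → Prop) (ord ord' : V ≃ Fin n) (u v : V)
    (hcan : IsCanonical E ord ord' u v)
    {a : V} (ha : a ∈ AncS E ord u v) : ord' a ≤ ord a := by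
  classical
  obtain ⟨hout, himg, hmono, hAD⟩ := hcan
  set S := AncS E ord u v ∪ DesS E ord u v with hSdef
  have haS : a ∈ S := Or.inl ha
  have key : {x ∈ S | ord' x ≤ ord' a} = {x ∈ AncS E ord u v | ord x ≤ ord a} := by
    ext x
    simp only [Set.mem_setOf_eq]
    constructor
    · rintro ⟨hxS, hx⟩
      have hxA : x ∈ AncS E ord u v := by
        rcases hxS with h | h
        · exact h
        · exact absurd hx (not_le.2 (hAD a ha x h))
      refine ⟨hxA, ?_⟩
      by_contra hlt
      push_neg at hlt
      exact absurd ((hmono a x (Or.inl ⟨ha, hxA⟩)).2 hlt) (not_lt.2 hx)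
    · rintro ⟨hxA, hx⟩
      refine ⟨Or.inl hxA, ?_⟩
      by_contra hlt
      push_neg at hlt
      exact absurd ((hmono a x (Or.inl ⟨ha, hxA⟩)).1 hlt) (not_lt.2 hx)
  have e1 : ⇑ord' '' {x ∈ S | ord' x ≤ ord' a} = {r ∈ ⇑ord '' S | r ≤ ord' a} := by
    rw [← himg]
    ext r
    simp only [Set.mem_image, Set.mem_setOf_eq]
    constructor
    · rintro ⟨x, ⟨hxS, hx⟩, rfl⟩; exact ⟨⟨x, hxS, rfl⟩, hx⟩
    · rintro ⟨⟨x, hxS, rfl⟩, hr⟩; exact ⟨x, ⟨hxS, hr⟩, rfl⟩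
  have e2 : ⇑ord '' {x ∈ S | ord x ≤ ord a} = {r ∈ ⇑ord '' S | r ≤ ord a} := by
    ext r
    simp only [Set.mem_image, Set.mem_setOf_eq]
    constructor
    · rintro ⟨x, ⟨hxS, hx⟩, rfl⟩; exact ⟨⟨x, hxS, rfl⟩, hx⟩
    · rintro ⟨⟨x, hxS, rfl⟩, hr⟩; exact ⟨x, ⟨hxS, hr⟩, rfl⟩
  have hp : ord' a ∈ ⇑ord '' S := by
    rw [← himg]; exact ⟨a, haS, rfl⟩
  refine pos_le_aux hp ?_
  calc {r ∈ ⇑ord '' S | r ≤ ord' a}.ncard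
      = {x ∈ S | ord' x ≤ ord' a}.ncard := by
        rw [← e1, Set.ncard_image_of_injective _ ord'.injective]
    _ = {x ∈ AncS E ord u v | ord x ≤ ord a}.ncard := by rw [key]
    _ ≤ {x ∈ S | ord x ≤ ord a}.ncard := by
        refine Set.ncard_le_ncard (fun x hx => ⟨Or.inl hx.1, hx.2⟩) (Set.toFinite _)
    _ = {r ∈ ⇑ord '' S | r ≤ ord a}.ncard := by
        rw [← e2, Set.ncard_image_of_injective _ ord.injective]

private lemma ord_le_ord' {V : Type*} [Fintype V] {n : ℕ}
    (E : V → V → Prop) (ord ord' : V ≃ Fin n) (u v : V)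
    (hcan : IsCanonical E ord ord' u v)
    {b : V} (hb : b ∈ DesS E ord u v) : ord b ≤ ord' b := by
  classical
  obtain ⟨hout, himg, hmono, hAD⟩ := hcan
  set S := AncS E ord u v ∪ DesS E ord u v with hSdef
  have hbS : b ∈ S := Or.inr hb
  have key : {x ∈ S | ord' b ≤ ord' x} = {x ∈ DesS E ord u v | ord b ≤ ord x} := by
    ext x
    simp only [Set.mem_setOf_eq]
    constructor
    · rintro ⟨hxS, hx⟩
      have hxD : x ∈ DesS E ord u v := by
        rcases hxS with h | h
        · exact absurd hx (not_le.2 (hAD x h b hb))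
        · exact h
      refine ⟨hxD, ?_⟩
      by_contra hlt
      push_neg at hlt
      exact absurd ((hmono x b (Or.inr ⟨hxD, hb⟩)).2 hlt) (not_lt.2 hx)
    · rintro ⟨hxD, hx⟩
      refine ⟨Or.inr hxD, ?_⟩
      by_contra hlt
      push_neg at hlt
      exact absurd ((hmono x b (Or.inr ⟨hxD, hb⟩)).1 hlt) (not_lt.2 hx)
  have e1 : ⇑ord' '' {x ∈ S | ord' b ≤ ord' x} = {r ∈ ⇑ord '' S | ord' b ≤ r} := by
    rw [← himg]
    ext r
    simp only [Set.mem_image, Set.mem_setOf_eq]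
    constructor
    · rintro ⟨x, ⟨hxS, hx⟩, rfl⟩; exact ⟨⟨x, hxS, rfl⟩, hx⟩
    · rintro ⟨⟨x, hxS, rfl⟩, hr⟩; exact ⟨x, ⟨hxS, hr⟩, rfl⟩
  have e2 : ⇑ord '' {x ∈ S | ord b ≤ ord x} = {r ∈ ⇑ord '' S | ord b ≤ r} := by
    ext r
    simp only [Set.mem_image, Set.mem_setOf_eq]
    constructor
    · rintro ⟨x, ⟨hxS, hx⟩, rfl⟩; exact ⟨⟨x, hxS, rfl⟩, hx⟩
    · rintro ⟨⟨x, hxS, rfl⟩, hr⟩; exact ⟨x, ⟨hxS, hr⟩, rfl⟩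
  have hp : ord' b ∈ ⇑ord '' S := by
    rw [← himg]; exact ⟨b, hbS, rfl⟩
  refine pos_ge_aux hp ?_
  calc {r ∈ ⇑ord '' S | ord' b ≤ r}.ncard
      = {x ∈ S | ord' b ≤ ord' x}.ncard := by
        rw [← e1, Set.ncard_image_of_injective _ ord'.injective]
    _ = {x ∈ DesS E ord u v | ord b ≤ ord x}.ncard := by rw [key]
    _ ≤ {x ∈ S | ord b ≤ ord x}.ncard := by
        refine Set.ncard_le_ncard (fun x hx => ⟨Or.inr hx.1, hx.2⟩) (Set.toFinite _)
    _ = {r ∈ ⇑ord '' S | ord b ≤ r}.ncard := by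
        rw [← e2, Set.ncard_image_of_injective _ ord.injective]

private lemma ord'_bounds {V : Type*} [Fintype V] {n : ℕ}
    (E : V → V → Prop) (ord ord' : V ≃ Fin n) (u v : V)
    (hcan : IsCanonical E ord ord' u v)
    {x : V} (hx : x ∈ AncS E ord u v ∪ DesS E ord u v) :
    ord v ≤ ord' x ∧ ord' x ≤ ord u := by
  have hmem : ord' x ∈ ⇑ord '' (AncS E ord u v ∪ DesS E ord u v) := by
    rw [← hcan.2.1]; exact ⟨x, hx, rfl⟩
  obtain ⟨y, hyS, hy⟩ := hmem
  rw [← hy]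
  rcases hyS with h | h
  · exact ⟨h.1, h.2.1⟩
  · exact ⟨h.1, h.2.1⟩

/-- the canonical reordering is a topological ordering of `G + (u,v)`. -/
theorem canonical_reordering_isTopOrd {V : Type*} [Fintype V] {n : ℕ}
    (E : V → V → Prop) (hacyc : Acyclic E)
    (ord : V ≃ Fin n) (htop : IsTopOrd E ord)
    (u v : V) (huv : ord v < ord u) (hnr : ¬ Reach E v u)
    (ord' : V ≃ Fin n) (hcan : IsCanonical E ord ord' u v) :
    (∀ a b, E a b → ord' a < ord' b) ∧ ord' u < ord' v := by
  classical
  have hL1 := fun {a} ha => ord'_le_ord E ord ord' u v hcan (a := a) ha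
  have hL2 := fun {b} hb => ord_le_ord' E ord ord' u v hcan (b := b) hb
  have hL3 := fun {x} hx => ord'_bounds E ord ord' u v hcan (x := x) hx
  obtain ⟨hout, himg, hmono, hAD⟩ := hcan
  have huA : u ∈ AncS E ord u v := ⟨huv.le, le_refl _, Relation.ReflTransGen.refl⟩
  have hvD : v ∈ DesS E ord u v := ⟨le_refl _, huv.le, Relation.ReflTransGen.refl⟩
  constructor
  · intro a b hab
    have hord : ord a < ord b := htop a b hab
    by_cases haS : a ∈ AncS E ord u v ∪ DesS E ord u v
    · by_cases hbS : b ∈ AncS E ord u v ∪ DesS E ord u v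
      · rcases haS with haA | haD
        · rcases hbS with hbA | hbD
          · exact (hmono a b (Or.inl ⟨haA, hbA⟩)).2 hord
          · exact hAD a haA b hbD
        · rcases hbS with hbA | hbD
          · exact absurd (Relation.ReflTransGen.trans haD.2.2
              (Relation.ReflTransGen.head hab hbA.2.2)) hnr
          · exact (hmono a b (Or.inr ⟨haD, hbD⟩)).2 hord
      · have hb' : ord' b = ord b := hout b hbS
        rcases haS with haA | haD
        · calc ord' a ≤ ord a := hL1 haA
            _ < ord b := hord
            _ = ord' b := hb'.symm
        · have hub : ord u < ord b := by
            by_contra hle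
            push_neg at hle
            exact hbS (Or.inr ⟨haD.1.trans hord.le,
              hle, Relation.ReflTransGen.tail haD.2.2 hab⟩)
          calc ord' a ≤ ord u := (hL3 (Or.inr haD)).2
            _ < ord b := hub
            _ = ord' b := hb'.symm
    · have ha' : ord' a = ord a := hout a haS
      by_cases hbS : b ∈ AncS E ord u v ∪ DesS E ord u v
      · rcases hbS with hbA | hbD
        · have hav : ord a < ord v := by
            by_contra hle
            push_neg at hle
            exact haS (Or.inl ⟨hle, hord.le.trans hbA.2.1,
              Relation.ReflTransGen.head hab hbA.2.2⟩)
          calc ord' a = ord a := ha'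
            _ < ord v := hav
            _ ≤ ord' b := (hL3 (Or.inl hbA)).1
        · calc ord' a = ord a := ha'
            _ < ord b := hord
            _ ≤ ord' b := hL2 hbD
      · rw [ha', hout b hbS]
        exact hord
  · exact hAD u huA v hvD
end

section
/- Let G be a DAG on n vertices with topological ordering ord, let u, v be vertices with i = ord(v) < ord(u) = j, and let t be an integer with i ≤ t ≤ j. If there is a directed path from v to u in G, then either the vertex w with ord(w) = t satisfies both v ⇝ w and w ⇝ u, or there exist vertices x, y such that v ⇝ x with i ≤ ord(x) ≤ t, y ⇝ u with t ≤ ord(y) ≤ j, and (x,y) is an edge of G. -/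
private lemma reach_ord_le {V : Type*} {n : ℕ} {E : V → V → Prop} (ord : V ≃ Fin n)
    (htop : IsTopOrd E ord) {a b : V} (h : Reach E a b) : (ord a : ℕ) ≤ (ord b : ℕ) := by
  induction h with
  | refl => exact le_refl _
  | tail _ e ih => exact ih.trans (le_of_lt (htop _ _ e))

private lemma cycle_witness_aux {V : Type*} {n : ℕ}
    (E : V → V → Prop) (ord : V ≃ Fin n) (htop : IsTopOrd E ord)
    (u : V) (t : ℕ) (ht2 : t ≤ (ord u : ℕ)) :
    ∀ v : V, Reach E v u → (ord v : ℕ) ≤ t →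
    (∃ w, (ord w : ℕ) = t ∧ Reach E v w ∧ Reach E w u) ∨
    (∃ x y, Reach E v x ∧ (ord v : ℕ) ≤ (ord x : ℕ) ∧ (ord x : ℕ) ≤ t ∧
        Reach E y u ∧ t ≤ (ord y : ℕ) ∧ (ord y : ℕ) ≤ (ord u : ℕ) ∧ E x y) := by
  intro v hpath
  induction hpath using Relation.ReflTransGen.head_induction_on with
  | refl =>
    intro h1
    exact Or.inl ⟨u, le_antisymm h1 ht2, Relation.ReflTransGen.refl, Relation.ReflTransGen.refl⟩
  | head e hrest ih =>
    rename_i a c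
    intro h1
    rcases eq_or_lt_of_le h1 with heq | hlt
    · exact Or.inl ⟨a, heq, Relation.ReflTransGen.refl, Relation.ReflTransGen.head e hrest⟩
    · by_cases hc : (ord c : ℕ) ≤ t
      · rcases ih hc with ⟨w, hw1, hw2, hw3⟩ | ⟨x, y, hx1, _, hx3, hy1, hy2, hy3, hxy⟩
        · exact Or.inl ⟨w, hw1, Relation.ReflTransGen.head e hw2, hw3⟩
        · exact Or.inr ⟨x, y, Relation.ReflTransGen.head e hx1,
            reach_ord_le ord htop (Relation.ReflTransGen.head e hx1), hx3, hy1, hy2, hy3, hxy⟩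
      · push_neg at hc
        exact Or.inr ⟨a, c, Relation.ReflTransGen.refl, le_refl _, h1, hrest,
          le_of_lt hc, reach_ord_le ord htop hrest, e⟩

/-- if `v ⇝ u`, then either the vertex at position `t` is both a
descendant of `v` and an ancestor of `u`, or some edge of `G` goes from a
descendant of `v` in positions `[i, t]` to an ancestor of `u` in positions `[t, j]`. -/
theorem cycle_witness {V : Type*} [Fintype V] {n : ℕ}
    (E : V → V → Prop) (hacyc : Acyclic E)
    (ord : V ≃ Fin n) (htop : IsTopOrd E ord)
    (u v : V) (huv : ord v < ord u)
    (t : ℕ) (ht1 : (ord v : ℕ) ≤ t) (ht2 : t ≤ (ord u : ℕ))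
    (hpath : Reach E v u) :
    (∃ w, (ord w : ℕ) = t ∧ Reach E v w ∧ Reach E w u) ∨
    (∃ x y, Reach E v x ∧ (ord v : ℕ) ≤ (ord x : ℕ) ∧ (ord x : ℕ) ≤ t ∧
        Reach E y u ∧ t ≤ (ord y : ℕ) ∧ (ord y : ℕ) ≤ (ord u : ℕ) ∧ E x y) := by
  exact cycle_witness_aux E ord htop u t ht2 v hpath ht1
end

section
/- Let G be a DAG on n vertices with topological ordering ord, and let u, v be vertices with i = ord(v) < ord(u) = j such that there is no directed path from v to u in G. Then there exists an integer t with i ≤ t ≤ j such that the number of descendants of v with ord-value in [i, t] equals the number of ancestors of u with ord-value in [t+1, j]; that is, |{y : i ≤ ord(y) ≤ t and v ⇝ y}| = |{w : t+1 ≤ ord(w) ≤ j and w ⇝ u}|. -/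
lemma my_discrete_ivt (f : ℕ → ℤ) (a b : ℕ) (hab : a ≤ b) (h1 : f a ≤ 0) (h2 : 0 < f b)
    (hstep : ∀ k, a ≤ k → k < b → f (k + 1) ≤ f k + 1) :
    ∃ t, a ≤ t ∧ t ≤ b ∧ f t = 0 := by
  classical
  set P : ℕ → Prop := fun t => a ≤ t ∧ f t ≤ 0 with hP
  have hPa : P a := ⟨le_rfl, h1⟩
  set t := Nat.findGreatest P b with ht
  have htb : t ≤ b := Nat.findGreatest_le b
  have hat : a ≤ t := Nat.le_findGreatest hab hPa
  have hPt : P t := Nat.findGreatest_spec hab hPa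
  have htlt : t < b := by
    rcases lt_or_eq_of_le htb with h | h
    · exact h
    · exfalso; rw [h] at hPt; omega
  have hnot : ¬ P (t + 1) := Nat.findGreatest_is_greatest (P := P) (n := b) (by omega) (by omega)
  have h3 : 0 < f (t + 1) := by
    by_contra h
    exact hnot ⟨by omega, by omega⟩
  have h4 : f (t + 1) ≤ f t + 1 := hstep t hat htlt
  refine ⟨t, hat, htb, ?_⟩
  have := hPt.2
  omega

/-- there is a position `t` with `i ≤ t ≤ j` balancing the number of
descendants of `v` in `[i, t]` against the number of ancestors of `u` in `[t+1, j]`. -/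
theorem balanced_split_exists {V : Type*} [Fintype V] {n : ℕ}
    (E : V → V → Prop) (hacyc : Acyclic E)
    (ord : V ≃ Fin n) (htop : IsTopOrd E ord)
    (u v : V) (huv : ord v < ord u) (hnr : ¬ Reach E v u) :
    ∃ t : ℕ, (ord v : ℕ) ≤ t ∧ t ≤ (ord u : ℕ) ∧
      {y : V | (ord v : ℕ) ≤ (ord y : ℕ) ∧ (ord y : ℕ) ≤ t ∧ Reach E v y}.ncard =
      {w : V | t + 1 ≤ (ord w : ℕ) ∧ (ord w : ℕ) ≤ (ord u : ℕ) ∧ Reach E w u}.ncard := by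
  classical
  set i := (ord v : ℕ) with hi
  set j := (ord u : ℕ) with hj
  have hij : i < j := huv
  set D : ℕ → Set V := fun t => {y : V | i ≤ (ord y : ℕ) ∧ (ord y : ℕ) ≤ t ∧ Reach E v y}
    with hD
  set A : ℕ → Set V := fun t => {w : V | t + 1 ≤ (ord w : ℕ) ∧ (ord w : ℕ) ≤ j ∧ Reach E w u}
    with hA
  set f : ℕ → ℤ := fun t => ((D t).ncard : ℤ) - ((A t).ncard : ℤ) with hf
  -- endpoint i
  have hDi : D i = {v} := by
    ext y
    simp only [hD, Set.mem_setOf_eq, Set.mem_singleton_iff]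
    constructor
    · rintro ⟨h1, h2, _⟩
      have hy : ord y = ord v := Fin.ext (le_antisymm h2 h1)
      exact ord.injective hy
    · rintro rfl; exact ⟨le_rfl, le_rfl, Relation.ReflTransGen.refl⟩
  have hfi : f i ≤ 0 := by
    have h1 : (D i).ncard = 1 := by rw [hDi]; exact Set.ncard_singleton v
    have h2 : 0 < (A i).ncard := by
      rw [Set.ncard_pos (Set.toFinite _)]
      exact ⟨u, hij, le_rfl, Relation.ReflTransGen.refl⟩
    simp only [hf, h1]
    omega
  -- endpoint j
  have hfj : 0 < f j := by
    have h1 : A j = ∅ := by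
      ext w
      simp only [hA, Set.mem_setOf_eq, Set.mem_empty_iff_false, iff_false]
      rintro ⟨h1, h2, _⟩; omega
    have h2 : 0 < (D j).ncard := by
      rw [Set.ncard_pos (Set.toFinite _)]
      exact ⟨v, le_rfl, le_of_lt hij, Relation.ReflTransGen.refl⟩
    simp only [hf, h1, Set.ncard_empty]
    omega
  -- step
  have hstep : ∀ k, i ≤ k → k < j → f (k + 1) ≤ f k + 1 := by
    intro k hik hkj
    have hkn : k + 1 < n := lt_of_le_of_lt hkj (ord u).isLt
    set x : V := ord.symm ⟨k + 1, hkn⟩ with hx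
    have hordx : (ord x : ℕ) = k + 1 := by simp [hx]
    have hDsub : D (k + 1) ⊆ insert x (D k) := by
      intro y hy
      obtain ⟨h1, h2, h3⟩ := hy
      rcases eq_or_lt_of_le h2 with h | h
      · left
        have : ord y = ord x := Fin.ext (by omega)
        exact ord.injective this
      · exact Or.inr ⟨h1, by omega, h3⟩
    have hAsub : A k ⊆ insert x (A (k + 1)) := by
      intro w hw
      obtain ⟨h1, h2, h3⟩ := hw
      rcases eq_or_lt_of_le h1 with h | h
      · left
        have : ord w = ord x := Fin.ext (by omega)
        exact ord.injective this
      · exact Or.inr ⟨by omega, h2, h3⟩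
    by_cases hvx : Reach E v x
    · -- x may be a new descendant, but cannot be an ancestor
      have hxA : x ∉ A k := by
        rintro ⟨-, -, hxu⟩
        exact hnr (hvx.trans hxu)
      have hAeq : A (k + 1) = A k := by
        apply Set.Subset.antisymm
        · rintro w ⟨h1, h2, h3⟩; exact ⟨by omega, h2, h3⟩
        · intro w hw
          rcases hAsub hw with h | h
          · exact absurd (h ▸ hw) hxA
          · exact h
      have hDle : (D (k + 1)).ncard ≤ (D k).ncard + 1 :=
        le_trans (Set.ncard_le_ncard hDsub (Set.toFinite _)) (Set.ncard_insert_le _ _)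
      simp only [hf, hAeq]
      omega
    · -- x is not a descendant
      have hDeq : D (k + 1) = D k := by
        apply Set.Subset.antisymm
        · intro y hy
          rcases hDsub hy with h | h
          · exact absurd (h ▸ hy).2.2 hvx
          · exact h
        · rintro y ⟨h1, h2, h3⟩; exact ⟨h1, by omega, h3⟩
      have hAle : (A k).ncard ≤ (A (k + 1)).ncard + 1 :=
        le_trans (Set.ncard_le_ncard hAsub (Set.toFinite _)) (Set.ncard_insert_le _ _)
      simp only [hf, hDeq]
      omega
  obtain ⟨t, h1, h2, h3⟩ := my_discrete_ivt f i j (le_of_lt hij) hfi hfj hstep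
  refine ⟨t, h1, h2, ?_⟩
  simp only [hf] at h3
  have : (D t).ncard = (A t).ncard := by omega
  exact this
end

section
/- Let G be a DAG on n vertices with topological ordering ord, let u, v be vertices with ord(v) < ord(u) and no directed path from v to u in G, and let ord' be the canonical reordering for ord, u, v. Then the total leftward movement of the set A equals the total rightward movement of the set D: Σ_{x ∈ A} (ord(x) − ord'(x)) = Σ_{y ∈ D} (ord'(y) − ord(y)); consequently Σ_{x ∈ V} |ord(x) − ord'(x)| = 2 Σ_{x ∈ A} (ord(x) − ord'(x)). -/
/-- the total leftward movement of `A` equals the total rightward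
movement of `D`, and the total movement is twice the movement of `A`. -/
theorem canonical_reordering_total_movement {V : Type*} [Fintype V] {n : ℕ}
    (E : V → V → Prop) (hacyc : Acyclic E)
    (ord : V ≃ Fin n) (htop : IsTopOrd E ord)
    (u v : V) (huv : ord v < ord u) (hnr : ¬ Reach E v u)
    (ord' : V ≃ Fin n) (hcan : IsCanonical E ord ord' u v) :
    (∑ᶠ x ∈ AncS E ord u v, (((ord x : ℕ) : ℤ) - ((ord' x : ℕ) : ℤ))) =
      (∑ᶠ y ∈ DesS E ord u v, (((ord' y : ℕ) : ℤ) - ((ord y : ℕ) : ℤ))) ∧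
    (∑ x : V, |((ord x : ℕ) : ℤ) - ((ord' x : ℕ) : ℤ)|) =
      2 * ∑ᶠ x ∈ AncS E ord u v, (((ord x : ℕ) : ℤ) - ((ord' x : ℕ) : ℤ)) := by
  classical
  obtain ⟨ha, hb, hc, hd⟩ := hcan
  set A := AncS E ord u v with hA
  set D := DesS E ord u v with hD
  have hdisj : ∀ x, x ∈ A → x ∈ D → False := fun x hxA hxD =>
    hnr (hxD.2.2.trans hxA.2.2)
  set s : Finset V := (A ∪ D).toFinset with hs
  have hmem : ∀ x, x ∈ s ↔ x ∈ A ∨ x ∈ D := by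
    intro x; simp [hs, Set.mem_union]
  have himg : s.image ord' = s.image ord := by
    apply Finset.coe_injective
    simp only [Finset.coe_image, Set.coe_toFinset, hs]
    exact hb
  -- every element of A moves left
  have hAle : ∀ x ∈ A, ord' x ≤ ord x := by
    intro x hxA
    by_contra hlt
    push_neg at hlt
    have hxs : x ∈ s := (hmem x).2 (Or.inl hxA)
    have hsub : s.filter (fun y => ord' y ≤ ord' x) ⊆ s.filter (fun y => ord y ≤ ord x) := by
      intro y hy
      simp only [Finset.mem_filter] at hy ⊢
      obtain ⟨hys, hyle⟩ := hy
      refine ⟨hys, ?_⟩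
      rcases (hmem y).1 hys with hyA | hyD
      · rcases lt_or_eq_of_le hyle with h | h
        · exact le_of_lt ((hc y x (Or.inl ⟨hyA, hxA⟩)).1 h)
        · have : y = x := ord'.injective h
          simp [this]
      · exact absurd hyle (not_le.2 (hd x hxA y hyD))
    have h1 : ((s.image ord').filter (fun p => p ≤ ord' x)).card
        = (s.filter (fun y => ord' y ≤ ord' x)).card := by
      rw [Finset.filter_image]
      exact Finset.card_image_of_injective _ ord'.injective
    have h2 : ((s.image ord).filter (fun p => p ≤ ord x)).card
        = (s.filter (fun y => ord y ≤ ord x)).card := by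
      rw [Finset.filter_image]
      exact Finset.card_image_of_injective _ ord.injective
    have hcards : ((s.image ord').filter (fun p => p ≤ ord' x)).card
        ≤ ((s.image ord).filter (fun p => p ≤ ord x)).card := by
      rw [h1, h2]; exact Finset.card_le_card hsub
    rw [himg] at hcards
    have hmemP : ord' x ∈ s.image ord := by
      rw [← himg]; exact Finset.mem_image_of_mem _ hxs
    have hstrict : ((s.image ord).filter (fun p => p ≤ ord x)).card
        < ((s.image ord).filter (fun p => p ≤ ord' x)).card := by
      apply Finset.card_lt_card
      constructor
      · intro p hp
        simp only [Finset.mem_filter] at hp ⊢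
        exact ⟨hp.1, le_of_lt (lt_of_le_of_lt hp.2 hlt)⟩
      · intro hcon
        have := hcon (Finset.mem_filter.2 ⟨hmemP, le_refl _⟩)
        simp only [Finset.mem_filter] at this
        exact absurd this.2 (not_le.2 hlt)
    omega
  -- every element of D moves right
  have hDle : ∀ y ∈ D, ord y ≤ ord' y := by
    intro x hxD
    by_contra hlt
    push_neg at hlt
    have hxs : x ∈ s := (hmem x).2 (Or.inr hxD)
    have hsub : s.filter (fun y => ord' x ≤ ord' y) ⊆ s.filter (fun y => ord x ≤ ord y) := by
      intro y hy
      simp only [Finset.mem_filter] at hy ⊢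
      obtain ⟨hys, hyle⟩ := hy
      refine ⟨hys, ?_⟩
      rcases (hmem y).1 hys with hyA | hyD
      · exact absurd hyle (not_le.2 (hd y hyA x hxD))
      · rcases lt_or_eq_of_le hyle with h | h
        · exact le_of_lt ((hc x y (Or.inr ⟨hxD, hyD⟩)).1 h)
        · have : x = y := ord'.injective h
          simp [this]
    have h1 : ((s.image ord').filter (fun p => ord' x ≤ p)).card
        = (s.filter (fun y => ord' x ≤ ord' y)).card := by
      rw [Finset.filter_image]
      exact Finset.card_image_of_injective _ ord'.injective
    have h2 : ((s.image ord).filter (fun p => ord x ≤ p)).card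
        = (s.filter (fun y => ord x ≤ ord y)).card := by
      rw [Finset.filter_image]
      exact Finset.card_image_of_injective _ ord.injective
    have hcards : ((s.image ord').filter (fun p => ord' x ≤ p)).card
        ≤ ((s.image ord).filter (fun p => ord x ≤ p)).card := by
      rw [h1, h2]; exact Finset.card_le_card hsub
    rw [himg] at hcards
    have hmemP : ord' x ∈ s.image ord := by
      rw [← himg]; exact Finset.mem_image_of_mem _ hxs
    have hstrict : ((s.image ord).filter (fun p => ord x ≤ p)).card
        < ((s.image ord).filter (fun p => ord' x ≤ p)).card := by
      apply Finset.card_lt_card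
      constructor
      · intro p hp
        simp only [Finset.mem_filter] at hp ⊢
        exact ⟨hp.1, le_of_lt (lt_of_lt_of_le hlt hp.2)⟩
      · intro hcon
        have := hcon (Finset.mem_filter.2 ⟨hmemP, le_refl _⟩)
        simp only [Finset.mem_filter] at this
        exact absurd this.2 (not_le.2 hlt)
    omega
  -- sums of positions over s agree
  have hsumEq : ∑ x ∈ s, ((ord' x : ℕ) : ℤ) = ∑ x ∈ s, ((ord x : ℕ) : ℤ) := by
    rw [← Finset.sum_image (f := fun p : Fin n => ((p : ℕ) : ℤ))
          (fun x _ y _ h => ord'.injective h),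
        ← Finset.sum_image (f := fun p : Fin n => ((p : ℕ) : ℤ))
          (fun x _ y _ h => ord.injective h), himg]
  -- split s
  have hsplit : s = A.toFinset ∪ D.toFinset := by
    simp [hs, Set.toFinset_union]
  have hdisjf : Disjoint A.toFinset D.toFinset := by
    rw [Finset.disjoint_left]
    intro x hx hx'
    exact hdisj x (Set.mem_toFinset.1 hx) (Set.mem_toFinset.1 hx')
  have hkey : ∑ x ∈ A.toFinset, (((ord x : ℕ) : ℤ) - ((ord' x : ℕ) : ℤ))
      + ∑ x ∈ D.toFinset, (((ord x : ℕ) : ℤ) - ((ord' x : ℕ) : ℤ)) = 0 := by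
    rw [← Finset.sum_union hdisjf, ← hsplit, Finset.sum_sub_distrib, hsumEq]
    ring
  have hfinA : ∑ᶠ x ∈ A, (((ord x : ℕ) : ℤ) - ((ord' x : ℕ) : ℤ))
      = ∑ x ∈ A.toFinset, (((ord x : ℕ) : ℤ) - ((ord' x : ℕ) : ℤ)) := by
    conv_lhs => rw [← Set.coe_toFinset A]
    rw [finsum_mem_coe_finset]
  have hfinD : ∑ᶠ y ∈ D, (((ord' y : ℕ) : ℤ) - ((ord y : ℕ) : ℤ))
      = ∑ y ∈ D.toFinset, (((ord' y : ℕ) : ℤ) - ((ord y : ℕ) : ℤ)) := by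
    conv_lhs => rw [← Set.coe_toFinset D]
    rw [finsum_mem_coe_finset]
  have hDneg : ∑ y ∈ D.toFinset, (((ord' y : ℕ) : ℤ) - ((ord y : ℕ) : ℤ))
      = - ∑ x ∈ D.toFinset, (((ord x : ℕ) : ℤ) - ((ord' x : ℕ) : ℤ)) := by
    rw [← Finset.sum_neg_distrib]
    exact Finset.sum_congr rfl (fun x _ => by ring)
  have hfirst : ∑ᶠ x ∈ A, (((ord x : ℕ) : ℤ) - ((ord' x : ℕ) : ℤ))
      = ∑ᶠ y ∈ D, (((ord' y : ℕ) : ℤ) - ((ord y : ℕ) : ℤ)) := by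
    rw [hfinA, hfinD, hDneg]; linarith [hkey]
  refine ⟨hfirst, ?_⟩
  -- second part
  have habs : ∑ x : V, |((ord x : ℕ) : ℤ) - ((ord' x : ℕ) : ℤ)|
      = ∑ x ∈ s, |((ord x : ℕ) : ℤ) - ((ord' x : ℕ) : ℤ)| := by
    rw [← Finset.sum_add_sum_compl s]
    have : ∑ x ∈ sᶜ, |((ord x : ℕ) : ℤ) - ((ord' x : ℕ) : ℤ)| = 0 := by
      apply Finset.sum_eq_zero
      intro x hx
      have hxn : x ∉ A ∪ D := by
        intro hcon
        exact (Finset.mem_compl.1 hx) ((hmem x).2 hcon)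
      rw [ha x hxn]
      simp
    rw [this, add_zero]
  have hAabs : ∑ x ∈ A.toFinset, |((ord x : ℕ) : ℤ) - ((ord' x : ℕ) : ℤ)|
      = ∑ x ∈ A.toFinset, (((ord x : ℕ) : ℤ) - ((ord' x : ℕ) : ℤ)) := by
    apply Finset.sum_congr rfl
    intro x hx
    have h := hAle x (Set.mem_toFinset.1 hx)
    have : ((ord' x : ℕ) : ℤ) ≤ ((ord x : ℕ) : ℤ) := by exact_mod_cast h
    rw [abs_of_nonneg (by linarith)]
  have hDabs : ∑ x ∈ D.toFinset, |((ord x : ℕ) : ℤ) - ((ord' x : ℕ) : ℤ)|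
      = ∑ x ∈ D.toFinset, (((ord' x : ℕ) : ℤ) - ((ord x : ℕ) : ℤ)) := by
    apply Finset.sum_congr rfl
    intro x hx
    have h := hDle x (Set.mem_toFinset.1 hx)
    have : ((ord x : ℕ) : ℤ) ≤ ((ord' x : ℕ) : ℤ) := by exact_mod_cast h
    rw [abs_of_nonpos (by linarith)]
    ring
  rw [habs, hsplit, Finset.sum_union hdisjf, hAabs, hDabs, hfinA]
  linarith [hkey, hDneg]
end

section
/- Let G be a DAG with topological ordering ord, and let u, v be vertices with ord(v) < ord(u) and no directed path from v to u in G. Then the number of ordered pairs (a,d) of vertices with a ⇝ u in G, v ⇝ d in G, and ord(d) ≤ ord(a) is at most the number of ordered pairs (x,y) of vertices such that x ⇝ y holds in G+(u,v) but x ⇝ y does not hold in G. -/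
/-- the number of pairs (ancestor of `u`, descendant of `v`) with
`ord d ≤ ord a` is at most the number of pairs that become comparable upon
inserting `(u,v)`. -/
theorem count_newly_comparable_pairs {V : Type*} [Fintype V] {n : ℕ}
    (E : V → V → Prop) (hacyc : Acyclic E)
    (ord : V ≃ Fin n) (htop : IsTopOrd E ord)
    (u v : V) (huv : ord v < ord u) (hnr : ¬ Reach E v u) :
    {p : V × V | Reach E p.1 u ∧ Reach E v p.2 ∧ ord p.2 ≤ ord p.1}.ncard ≤
    {p : V × V | Reach (AddEdge E u v) p.1 p.2 ∧ ¬ Reach E p.1 p.2}.ncard := by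
  have hmono : ∀ x y, Reach E x y → ord x ≤ ord y := by
    intro x y h
    induction h with
    | refl => exact le_refl _
    | tail _ he ih => exact le_of_lt (lt_of_le_of_lt ih (htop _ _ he))
  apply Set.ncard_le_ncard _ (Set.toFinite _)
  rintro ⟨a, d⟩ ⟨hau, hvd, hda⟩
  constructor
  · exact Relation.ReflTransGen.trans
      (Relation.ReflTransGen.mono (fun x y h => Or.inl h : ∀ x y, E x y → AddEdge E u v x y) _ _ hau)
      (Relation.ReflTransGen.trans
        (Relation.ReflTransGen.single (Or.inr ⟨rfl, rfl⟩))
        (Relation.ReflTransGen.mono (fun x y h => Or.inl h : ∀ x y, E x y → AddEdge E u v x y) _ _ hvd))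
  · intro had
    have h1 : ord a ≤ ord d := hmono _ _ had
    have h2 : a = d := ord.injective (le_antisymm h1 hda)
    exact hnr (Relation.ReflTransGen.trans hvd (h2 ▸ hau))
end

section
/- Let G be a DAG with topological ordering ord, and let u, v be vertices with ord(v) < ord(u) and no directed path from v to u in G. Then the number of ordered pairs of edges ((w,x),(y,z)) of G with x ⇝ u, v ⇝ y, and ord(y) < ord(x) is at most the number of ordered pairs of edges ((a,b),(c,d)) such that b ⇝ c holds in G+(u,v) but b ⇝ c does not hold in G. -/
/-- the number of pairs of edges (into an ancestor of `u`, out of a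
descendant of `v`) with `ord y < ord x` is at most the number of pairs of edges
of `G + (u,v)` that become related for the first time upon inserting `(u,v)`. -/
theorem count_newly_related_edge_pairs {V : Type*} [Fintype V] {n : ℕ}
    (E : V → V → Prop) (hacyc : Acyclic E)
    (ord : V ≃ Fin n) (htop : IsTopOrd E ord)
    (u v : V) (huv : ord v < ord u) (hnr : ¬ Reach E v u) :
    {q : (V × V) × (V × V) | E q.1.1 q.1.2 ∧ E q.2.1 q.2.2 ∧
        Reach E q.1.2 u ∧ Reach E v q.2.1 ∧ ord q.2.1 < ord q.1.2}.ncard ≤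
    {q : (V × V) × (V × V) | AddEdge E u v q.1.1 q.1.2 ∧ AddEdge E u v q.2.1 q.2.2 ∧
        Reach (AddEdge E u v) q.1.2 q.2.1 ∧ ¬ Reach E q.1.2 q.2.1}.ncard := by
  have hmono : ∀ a b, Reach E a b → ord a ≤ ord b := by
    intro a b hab
    induction hab with
    | refl => exact le_refl _
    | tail _ h ih => exact le_of_lt (lt_of_le_of_lt ih (htop _ _ h))
  apply Set.ncard_le_ncard _ (Set.toFinite _)
  rintro ⟨⟨w, x⟩, ⟨y, z⟩⟩ ⟨h1, h2, h3, h4, h5⟩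
  refine ⟨Or.inl h1, Or.inl h2, ?_, ?_⟩
  · have hxu : Reach (AddEdge E u v) x u := Relation.ReflTransGen.mono (fun a b h => Or.inl h) _ _ h3
    have hvy : Reach (AddEdge E u v) v y := Relation.ReflTransGen.mono (fun a b h => Or.inl h) _ _ h4
    exact hxu.trans (Relation.ReflTransGen.trans
      (Relation.ReflTransGen.single (Or.inr ⟨rfl, rfl⟩)) hvy)
  · intro hxy
    exact absurd (hmono _ _ hxy) (not_le_of_gt h5)
end

section
/- Let G_0 ⊆ G_1 ⊆ ⋯ ⊆ G_m be an increasing chain of digraphs on a common finite vertex set V, each acyclic, and let E be the edge set of G_m with |E| = m'. For edges e = (a,b) and e' = (c,d) in E, say e leads to e' in G_k if both e and e' are edges of G_k and b ⇝ c in G_k. Then Σ_{k=1}^{m} |{(e,e') ∈ E×E : e ≠ e', e leads to e' in G_k but not in G_{k−1}}| ≤ m'(m'−1)/2. -/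
/-- `e` leads to `e'` in the digraph `H`: both are edges of `H` and the head of
`e` reaches the tail of `e'` in `H`. -/
def LeadsTo {V : Type*} (H : V → V → Prop) (e e' : V × V) : Prop :=
  H e.1 e.2 ∧ H e'.1 e'.2 ∧ Reach H e.2 e'.1

/-- over an increasing chain of DAGs, the total number of ordered
pairs of distinct edges of the final graph that newly "lead to" each other is at
most `m'(m'-1)/2` where `m'` is the number of edges of the final graph. -/
theorem total_newly_related_edge_pairs {V : Type*} [Fintype V] {m m' : ℕ}
    (G : ℕ → V → V → Prop)
    (hmono : ∀ k, 1 ≤ k → k ≤ m → ∀ x y, G (k - 1) x y → G k x y)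
    (hacyc : ∀ k ≤ m, Acyclic (G k))
    (hE : {p : V × V | G m p.1 p.2}.ncard = m') :
    ∑ k ∈ Finset.Icc 1 m,
        {q : (V × V) × (V × V) | G m q.1.1 q.1.2 ∧ G m q.2.1 q.2.2 ∧ q.1 ≠ q.2 ∧
          LeadsTo (G k) q.1 q.2 ∧ ¬ LeadsTo (G (k - 1)) q.1 q.2}.ncard ≤
      m' * (m' - 1) / 2 := by
  classical
  -- monotonicity of the chain
  have mono : ∀ k l, k ≤ l → l ≤ m → ∀ x y, G k x y → G l x y := by
    intro k l hkl hlm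
    induction l with
    | zero => intro x y h; obtain rfl := Nat.le_zero.mp hkl; exact h
    | succ l ih =>
      intro x y h
      rcases Nat.lt_or_ge k (l + 1) with hk | hk
      · have hkl' : k ≤ l := by omega
        have := ih hkl' (by omega) x y h
        exact hmono (l + 1) (by omega) hlm x y (by simpa using this)
      · obtain rfl : k = l + 1 := le_antisymm hkl hk
        exact h
  have lmono : ∀ k l, k ≤ l → l ≤ m → ∀ p q : V × V,
      LeadsTo (G k) p q → LeadsTo (G l) p q := by
    rintro k l hkl hlm p q ⟨h1, h2, h3⟩
    exact ⟨mono k l hkl hlm _ _ h1, mono k l hkl hlm _ _ h2,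
      Relation.ReflTransGen.mono (mono k l hkl hlm) _ _ h3⟩
  set S : Set (V × V) := {p | G m p.1 p.2} with hS
  set A : ℕ → Set ((V × V) × (V × V)) := fun k =>
    {q | G m q.1.1 q.1.2 ∧ G m q.2.1 q.2.2 ∧ q.1 ≠ q.2 ∧
      LeadsTo (G k) q.1 q.2 ∧ ¬ LeadsTo (G (k - 1)) q.1 q.2} with hA
  set U : Set ((V × V) × (V × V)) :=
    {q | q.1 ∈ S ∧ q.2 ∈ S ∧ q.1 ≠ q.2 ∧ LeadsTo (G m) q.1 q.2} with hU
  -- no pair is related in both directions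
  have hcy : ∀ q ∈ U, Prod.swap q ∉ U := by
    rintro ⟨e, e'⟩ ⟨-, -, -, hed1, hed2, hre⟩ ⟨-, -, -, hed1', hed2', hre'⟩
    have t1 : Relation.ReflTransGen (G m) e.1 e'.1 :=
      (Relation.ReflTransGen.single hed1).trans hre
    have t2 : Relation.TransGen (G m) e'.1 e.1 :=
      Relation.TransGen.head' hed2 hre'
    exact hacyc m le_rfl e.1 (Relation.TransGen.trans_right t1 t2)
  have hUD : U ⊆ Set.offDiag S := fun q hq => ⟨hq.1, hq.2.1, hq.2.2.1⟩
  have hU'D : Prod.swap '' U ⊆ Set.offDiag S := by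
    rintro q ⟨p, hp, rfl⟩
    exact ⟨hp.2.1, hp.1, fun h => hp.2.2.1 h.symm⟩
  have hdisj : Disjoint U (Prod.swap '' U) := by
    rw [Set.disjoint_left]
    rintro q hq ⟨p, hp, rfl⟩
    exact hcy p hp (by simpa using hq)
  -- cardinality of the off-diagonal
  have hSfin : S.Finite := Set.toFinite _
  have hoffcard : (Set.offDiag S).ncard = m' * m' - m' := by
    have h1 : Set.offDiag S = ↑(S.toFinset.offDiag) := by
      ext q; simp [Set.mem_offDiag, Finset.mem_offDiag]
    rw [h1, Set.ncard_coe_finset, Finset.offDiag_card, ← Set.ncard_eq_toFinset_card', hE]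
  have hUcard : U.ncard * 2 ≤ m' * (m' - 1) := by
    have himg : (Prod.swap '' U).ncard = U.ncard :=
      Set.ncard_image_of_injective _ Prod.swap_injective
    have hun : (U ∪ Prod.swap '' U).ncard = U.ncard + (Prod.swap '' U).ncard :=
      Set.ncard_union_eq hdisj (Set.toFinite _) (Set.toFinite _)
    have hle : (U ∪ Prod.swap '' U).ncard ≤ (Set.offDiag S).ncard :=
      Set.ncard_le_ncard (Set.union_subset hUD hU'D) (Set.toFinite _)
    have hmm : m' * (m' - 1) = m' * m' - m' := by
      cases m' with
      | zero => simp
      | succ n => simp [Nat.succ_sub_one, Nat.mul_succ]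
    omega
  -- each A k is contained in U
  have hAU : ∀ k ∈ Finset.Icc 1 m, A k ⊆ U := by
    intro k hk q hq
    obtain ⟨h1, h2, h3, h4, -⟩ := hq
    simp only [Finset.mem_Icc] at hk
    exact ⟨h1, h2, h3, lmono k m hk.2 le_rfl _ _ h4⟩
  -- the sets A k are pairwise disjoint
  have hApd : ∀ k ∈ Finset.Icc 1 m, ∀ j ∈ Finset.Icc 1 m, k ≠ j →
      Disjoint (A k) (A j) := by
    have key : ∀ k j, k ∈ Finset.Icc 1 m → j ∈ Finset.Icc 1 m → k < j →
        Disjoint (A k) (A j) := by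
      intro k j hk hj hkj
      simp only [Finset.mem_Icc] at hk hj
      rw [Set.disjoint_left]
      rintro q ⟨-, -, -, h4, -⟩ ⟨-, -, -, -, h5⟩
      exact h5 (lmono k (j - 1) (by omega) (by omega) _ _ h4)
    intro k hk j hj hne
    rcases Nat.lt_or_ge k j with h | h
    · exact key k j hk hj h
    · exact (key j k hj hk (by omega)).symm
  -- convert to finsets and count
  calc ∑ k ∈ Finset.Icc 1 m, (A k).ncard
      = ∑ k ∈ Finset.Icc 1 m, (A k).toFinset.card := by
        refine Finset.sum_congr rfl fun k _ => ?_
        exact Set.ncard_eq_toFinset_card' _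
    _ = ((Finset.Icc 1 m).biUnion fun k => (A k).toFinset).card := by
        refine (Finset.card_biUnion ?_).symm
        intro k hk j hj hne
        rw [Function.onFun, Finset.disjoint_left]
        intro q hq hq'
        rw [Set.mem_toFinset] at hq hq'
        exact (Set.disjoint_left.mp (hApd k hk j hj hne)) hq hq'
    _ ≤ U.toFinset.card := by
        apply Finset.card_le_card
        intro q hq
        rw [Finset.mem_biUnion] at hq
        obtain ⟨k, hk, hq⟩ := hq
        rw [Set.mem_toFinset] at *
        exact hAU k hk hq
    _ = U.ncard := (Set.ncard_eq_toFinset_card' _).symm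
    _ ≤ m' * (m' - 1) / 2 := Nat.le_div_iff_mul_le two_pos |>.mpr hUcard
end

section
/- Let n ≥ 1 and let X : {1,…,n} × {1,…,n} → ℝ satisfy: (i) X(i,j) = 0 whenever j ≤ i; (ii) 0 ≤ X(i,j) ≤ n for all i, j; and (iii) for every i, Σ_{j > i} X(i,j) − Σ_{j < i} X(j,i) ≤ n. Then Σ_{i=1}^{n} Σ_{j=1}^{n} X(i,j) ≤ 4·n^{5/2}. -/
/-- the linear-programming bound: any `X` satisfying constraints
(i)-(iii) has total sum at most `4 n^{5/2} = 4 n² √n`. -/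
theorem lp_bound (n : ℕ) (hn : 1 ≤ n) (X : ℕ → ℕ → ℝ)
    (hzero : ∀ i ∈ Finset.Icc 1 n, ∀ j ∈ Finset.Icc 1 n, j ≤ i → X i j = 0)
    (hrange : ∀ i ∈ Finset.Icc 1 n, ∀ j ∈ Finset.Icc 1 n,
      0 ≤ X i j ∧ X i j ≤ (n : ℝ))
    (hbal : ∀ i ∈ Finset.Icc 1 n,
      (∑ j ∈ (Finset.Icc 1 n).filter (fun j => i < j), X i j) -
        (∑ j ∈ (Finset.Icc 1 n).filter (fun j => j < i), X j i) ≤ (n : ℝ)) :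
    ∑ i ∈ Finset.Icc 1 n, ∑ j ∈ Finset.Icc 1 n, X i j ≤
      4 * ((n : ℝ) ^ 2 * Real.sqrt n) := by
  set I := Finset.Icc 1 n with hI
  have hX0 : ∀ i ∈ I, ∀ j ∈ I, 0 ≤ X i j := fun i hi j hj => (hrange i hi j hj).1
  -- Step 1: cut lemma
  have hcut : ∀ k ∈ I, ∑ i ∈ Finset.Icc 1 k, ∑ j ∈ I, (if k < j then X i j else 0)
      ≤ (k : ℝ) * n := by
    intro k hk
    have hk' : k ≤ n := (Finset.mem_Icc.mp hk).2
    have hsub : Finset.Icc 1 k ⊆ I := Finset.Icc_subset_Icc_right hk'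
    have hsum : ∑ i ∈ Finset.Icc 1 k,
        ((∑ j ∈ I.filter (fun j => i < j), X i j) -
          (∑ j ∈ I.filter (fun j => j < i), X j i)) ≤ (k : ℝ) * n := by
      calc _ ≤ ∑ i ∈ Finset.Icc 1 k, (n : ℝ) :=
            Finset.sum_le_sum (fun i hi => hbal i (hsub hi))
        _ = (k : ℝ) * n := by
            rw [Finset.sum_const, Nat.card_Icc]
            simp [nsmul_eq_mul]
    have key : ∑ i ∈ Finset.Icc 1 k,
        ((∑ j ∈ I.filter (fun j => i < j), X i j) -
          (∑ j ∈ I.filter (fun j => j < i), X j i)) =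
        ∑ i ∈ Finset.Icc 1 k, ∑ j ∈ I, (if k < j then X i j else 0) := by
      rw [Finset.sum_sub_distrib]
      have e1 : ∀ i ∈ Finset.Icc 1 k,
          ∑ j ∈ I.filter (fun j => i < j), X i j =
          (∑ j ∈ I, (if k < j then X i j else 0)) +
            ∑ j ∈ Finset.Icc 1 k, (if i < j then X i j else 0) := by
        intro i hi
        have hik : i ≤ k := (Finset.mem_Icc.mp hi).2
        rw [← Finset.sum_filter, ← Finset.sum_filter, ← Finset.sum_union]
        · apply Finset.sum_congr _ (fun _ _ => rfl)
          ext j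
          simp only [Finset.mem_filter, Finset.mem_union, Finset.mem_Icc, hI]
          omega
        · rw [Finset.disjoint_left]
          intro j hj1 hj2
          simp only [Finset.mem_filter, Finset.mem_Icc] at hj1 hj2
          omega
      have e2 : ∀ i ∈ Finset.Icc 1 k,
          ∑ j ∈ I.filter (fun j => j < i), X j i =
          ∑ j ∈ Finset.Icc 1 k, (if j < i then X j i else 0) := by
        intro i hi
        have hik : i ≤ k := (Finset.mem_Icc.mp hi).2
        rw [← Finset.sum_filter]
        apply Finset.sum_congr _ (fun _ _ => rfl)
        ext j
        simp only [Finset.mem_filter, Finset.mem_Icc, hI]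
        omega
      rw [Finset.sum_congr rfl e1, Finset.sum_congr rfl e2, Finset.sum_add_distrib]
      have e3 : ∑ i ∈ Finset.Icc 1 k, ∑ j ∈ Finset.Icc 1 k, (if i < j then X i j else 0)
          = ∑ i ∈ Finset.Icc 1 k, ∑ j ∈ Finset.Icc 1 k, (if j < i then X j i else 0) := by
        rw [Finset.sum_comm]
      rw [e3]
      ring
    linarith [key ▸ hsum]
  have hT : ∑ i ∈ I, ∑ j ∈ I, ((j:ℝ) - (i:ℝ)) * X i j ≤ (n:ℝ) * ((n:ℝ) * n) := by
    have key : ∀ i ∈ I, ∀ j ∈ I, ((j:ℝ) - (i:ℝ)) * X i j =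
        ∑ k ∈ I, (if i ≤ k ∧ k < j then X i j else 0) := by
      intro i hi j hj
      have hcard : ∑ k ∈ I, (if i ≤ k ∧ k < j then X i j else 0) =
          ((I.filter (fun k => i ≤ k ∧ k < j)).card : ℝ) * X i j := by
        rw [← Finset.sum_filter, Finset.sum_const, nsmul_eq_mul]
      rw [hcard]
      rcases lt_or_ge i j with h | h
      · have hi' := Finset.mem_Icc.mp (hI ▸ hi)
        have hj' := Finset.mem_Icc.mp (hI ▸ hj)
        have : I.filter (fun k => i ≤ k ∧ k < j) = Finset.Icc i (j-1) := by
          ext k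
          simp only [Finset.mem_filter, Finset.mem_Icc, hI]
          omega
        rw [this, Nat.card_Icc]
        have : j - 1 + 1 - i = j - i := by omega
        rw [this]
        congr 1
        push_cast [Nat.cast_sub (le_of_lt h)]
        ring
      · rw [hzero i hi j hj h]
        ring
    rw [Finset.sum_congr rfl (fun i hi => Finset.sum_congr rfl (fun j hj => key i hi j hj))]
    have swap : ∑ i ∈ I, ∑ j ∈ I, ∑ k ∈ I, (if i ≤ k ∧ k < j then X i j else 0) =
        ∑ k ∈ I, ∑ i ∈ I, ∑ j ∈ I, (if i ≤ k ∧ k < j then X i j else 0) := by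
      calc ∑ i ∈ I, ∑ j ∈ I, ∑ k ∈ I, (if i ≤ k ∧ k < j then X i j else 0)
          = ∑ i ∈ I, ∑ k ∈ I, ∑ j ∈ I, (if i ≤ k ∧ k < j then X i j else 0) :=
            Finset.sum_congr rfl (fun i _ => Finset.sum_comm)
        _ = ∑ k ∈ I, ∑ i ∈ I, ∑ j ∈ I, (if i ≤ k ∧ k < j then X i j else 0) :=
            Finset.sum_comm
    rw [swap]
    have hterm : ∀ k ∈ I, ∑ i ∈ I, ∑ j ∈ I, (if i ≤ k ∧ k < j then X i j else 0)
        ≤ (k : ℝ) * n := by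
      intro k hk
      have e : ∑ i ∈ I, ∑ j ∈ I, (if i ≤ k ∧ k < j then X i j else 0) =
          ∑ i ∈ Finset.Icc 1 k, ∑ j ∈ I, (if k < j then X i j else 0) := by
        have : ∀ i j : ℕ, (if i ≤ k ∧ k < j then X i j else 0) =
            if i ≤ k then (if k < j then X i j else 0) else 0 := by
          intro i j; by_cases h1 : i ≤ k <;> by_cases h2 : k < j <;> simp [h1, h2]
        simp_rw [this]
        have this2 : ∀ i, (∑ j ∈ I, if i ≤ k then (if k < j then X i j else 0) else 0) =
            if i ≤ k then (∑ j ∈ I, if k < j then X i j else 0) else 0 := by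
          intro i; split_ifs <;> simp
        simp_rw [this2]
        rw [← Finset.sum_filter]
        apply Finset.sum_congr _ (fun _ _ => rfl)
        ext i
        have hk' := Finset.mem_Icc.mp (hI ▸ hk)
        simp only [Finset.mem_filter, Finset.mem_Icc, hI]
        omega
      rw [e]; exact hcut k hk
    calc ∑ k ∈ I, ∑ i ∈ I, ∑ j ∈ I, (if i ≤ k ∧ k < j then X i j else 0)
        ≤ ∑ k ∈ I, (k:ℝ) * n := Finset.sum_le_sum hterm
      _ ≤ ∑ k ∈ I, (n:ℝ) * n := by
          apply Finset.sum_le_sum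
          intro k hk
          have hk' := Finset.mem_Icc.mp (hI ▸ hk)
          have : (k:ℝ) ≤ n := by exact_mod_cast hk'.2
          nlinarith [Nat.cast_nonneg (α := ℝ) n]
      _ = (n:ℝ) * ((n:ℝ)*n) := by
          rw [Finset.sum_const, hI, Nat.card_Icc, nsmul_eq_mul]
          push_cast; ring
  set d := Nat.sqrt n + 1 with hd
  have hd0 : (0:ℝ) < (d:ℝ) := by positivity
  have hpt : ∀ i ∈ I, ∀ j ∈ I, X i j ≤
      (if i < j ∧ j ≤ i + d then X i j else 0) + (1/(d:ℝ)) * (((j:ℝ) - i) * X i j) := by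
    intro i hi j hj
    have h0 := (hrange i hi j hj).1
    rcases le_or_gt j i with h | h
    · rw [hzero i hi j hj h]
      have : ¬ (i < j ∧ j ≤ i + d) := by omega
      simp [this]
    · have hji : (1:ℝ) ≤ (j:ℝ) - i := by
        have : (i:ℝ) + 1 ≤ j := by exact_mod_cast h
        linarith
      by_cases h2 : j ≤ i + d
      · rw [if_pos ⟨h, h2⟩]
        have : 0 ≤ (1/(d:ℝ)) * (((j:ℝ) - i) * X i j) := by positivity
        linarith
      · rw [if_neg (by tauto)]
        have hjd : (d:ℝ) ≤ (j:ℝ) - i := by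
          have h3 : i + d + 1 ≤ j := by omega
          have h4 := Nat.cast_le (α := ℝ) |>.mpr h3
          push_cast at h4 ⊢
          linarith
        rw [zero_add, div_mul_eq_mul_div, one_mul, le_div_iff₀ hd0]
        nlinarith
  have hstep : ∑ i ∈ I, ∑ j ∈ I, X i j ≤
      (∑ i ∈ I, ∑ j ∈ I, (if i < j ∧ j ≤ i + d then X i j else 0)) +
        (1/(d:ℝ)) * ∑ i ∈ I, ∑ j ∈ I, ((j:ℝ) - i) * X i j := by
    rw [Finset.mul_sum]
    simp_rw [Finset.mul_sum]
    rw [← Finset.sum_add_distrib]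
    apply Finset.sum_le_sum
    intro i hi
    rw [← Finset.sum_add_distrib]
    exact Finset.sum_le_sum (fun j hj => hpt i hi j hj)
  have hshort : ∀ i ∈ I, ∑ j ∈ I, (if i < j ∧ j ≤ i + d then X i j else 0) ≤ (d:ℝ) * n := by
    intro i hi
    rw [← Finset.sum_filter]
    calc ∑ j ∈ I.filter (fun j => i < j ∧ j ≤ i + d), X i j
        ≤ ∑ j ∈ I.filter (fun j => i < j ∧ j ≤ i + d), (n:ℝ) := by
          apply Finset.sum_le_sum
          intro j hj
          exact (hrange i hi j (Finset.mem_filter.mp hj).1).2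
      _ = ((I.filter (fun j => i < j ∧ j ≤ i + d)).card : ℝ) * n := by
          rw [Finset.sum_const, nsmul_eq_mul]
      _ ≤ (d:ℝ) * n := by
          have hsub : I.filter (fun j => i < j ∧ j ≤ i + d) ⊆ Finset.Ioc i (i+d) := by
            intro j hj
            simp only [Finset.mem_filter] at hj
            simp only [Finset.mem_Ioc]
            omega
          have hcard := Finset.card_le_card hsub
          rw [Nat.card_Ioc] at hcard
          have hc : ((I.filter (fun j => i < j ∧ j ≤ i + d)).card : ℝ) ≤ (d:ℝ) := by
            exact_mod_cast hcard.trans_eq (by omega)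
          have hn0 : (0:ℝ) ≤ n := Nat.cast_nonneg n
          nlinarith
  have hS : ∑ i ∈ I, ∑ j ∈ I, X i j ≤
      (n:ℝ) * ((d:ℝ) * n) + (1/(d:ℝ)) * ((n:ℝ) * ((n:ℝ) * n)) := by
    refine hstep.trans (add_le_add ?_ (by
      apply mul_le_mul_of_nonneg_left hT
      positivity))
    calc ∑ i ∈ I, ∑ j ∈ I, (if i < j ∧ j ≤ i + d then X i j else 0)
        ≤ ∑ i ∈ I, (d:ℝ) * n := Finset.sum_le_sum hshort
      _ = (n:ℝ) * ((d:ℝ) * n) := by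
          rw [Finset.sum_const, nsmul_eq_mul, hI, Nat.card_Icc]
          norm_num
  set s := Real.sqrt n with hs
  have hs1 : 1 ≤ s := Real.one_le_sqrt.mpr (by exact_mod_cast hn)
  have hs2 : s * s = n := Real.mul_self_sqrt (Nat.cast_nonneg n)
  have hda : (d:ℝ) ≤ s + 1 := by
    have h2 : ((Nat.sqrt n : ℕ):ℝ) * ((Nat.sqrt n : ℕ):ℝ) ≤ (n:ℝ) := by
      exact_mod_cast Nat.sqrt_le n
    have h1 : ((Nat.sqrt n : ℕ):ℝ) ≤ s := by
      nlinarith [Nat.cast_nonneg (α := ℝ) (Nat.sqrt n)]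
    rw [hd]
    push_cast
    linarith
  have hdb : (n:ℝ) ≤ s * d := by
    have h2 : n < (Nat.sqrt n + 1)^2 := Nat.lt_succ_sqrt' n
    have h3 : (n:ℝ) < ((d:ℝ))^2 := by exact_mod_cast h2
    have h1 : s ≤ (d:ℝ) := by nlinarith [Real.sqrt_nonneg (n:ℝ)]
    nlinarith [Real.sqrt_nonneg (n:ℝ)]
  have hn1 : (1:ℝ) ≤ n := by exact_mod_cast hn
  have e1 : (n:ℝ)*((d:ℝ)*n) ≤ (n:ℝ)^2*s + (n:ℝ)^2 := by nlinarith
  have e2 : (1/(d:ℝ)) * ((n:ℝ)*((n:ℝ)*n)) ≤ (n:ℝ)^2*s := by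
    rw [div_mul_eq_mul_div, one_mul, div_le_iff₀ hd0]
    nlinarith [mul_le_mul_of_nonneg_left hdb (sq_nonneg (n:ℝ))]
  have e3 : (n:ℝ)^2 ≤ (n:ℝ)^2*s := by nlinarith
  have hpos : (0:ℝ) ≤ (n:ℝ)^2*s := by positivity
  linarith
end

section
/- Let G be a DAG with topological ordering ord, and let u, v be vertices with ord(v) < ord(u) and no directed path from v to u in G. Then the number of pairs (w, (y,z)) where w is a vertex with w ⇝ u in G and (y,z) is an edge of G with v ⇝ y and ord(y) < ord(w), is at most the number of pairs (w', (c,d)) of a vertex w' and an edge (c,d) of G such that w' ⇝ c holds in G+(u,v) but w' ⇝ c does not hold in G. -/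
/-- the number of pairs (ancestor `w` of `u`, edge `(y,z)` out of a
descendant of `v`) with `ord y < ord w` is at most the number of
(vertex, edge-of-`G`) pairs that become related for the first time upon
inserting `(u,v)`. -/
theorem count_newly_related_vertex_edge_pairs {V : Type*} [Fintype V] {n : ℕ}
    (E : V → V → Prop) (hacyc : Acyclic E)
    (ord : V ≃ Fin n) (htop : IsTopOrd E ord)
    (u v : V) (huv : ord v < ord u) (hnr : ¬ Reach E v u) :
    {q : V × (V × V) | Reach E q.1 u ∧ E q.2.1 q.2.2 ∧ Reach E v q.2.1 ∧
        ord q.2.1 < ord q.1}.ncard ≤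
    {q : V × (V × V) | E q.2.1 q.2.2 ∧
        Reach (AddEdge E u v) q.1 q.2.1 ∧ ¬ Reach E q.1 q.2.1}.ncard := by
  have hle : ∀ x y : V, Reach E x y → ord x ≤ ord y := by
    intro x y h
    induction h with
    | refl => exact le_refl _
    | tail hab h ih => exact ih.trans (htop _ _ h).le
  apply Set.ncard_le_ncard
  · rintro ⟨w, y, z⟩ ⟨hwu, hyz, hvy, hord⟩
    refine ⟨hyz, ?_, ?_⟩
    · have h1 : Reach (AddEdge E u v) w u := Relation.ReflTransGen.mono (fun a b h => Or.inl h) w u hwu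
      have h2 : Reach (AddEdge E u v) v y := Relation.ReflTransGen.mono (fun a b h => Or.inl h) v y hvy
      exact (h1.tail (Or.inr ⟨rfl, rfl⟩)).trans h2
    · intro h
      exact absurd (hle _ _ h) (not_le.mpr hord)
  · exact Set.toFinite _
end
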